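/- arXiv:1201.3566 — 3 statements merged into one kernel-verified Lean document; each statement's English description precedes it below -/
import Mathlib

section
/- For all vectors a, b in ℝ^N and all p in the open interval (1, 2), one has ⟨|a|^{p-2} a - |b|^{p-2} b, a - b⟩ ≥ (p-1) |a - b|² (|a|^p + |b|^p)^{(p-2)/p}, provided (|a|, |b|) ≠ (0,0). -/
open RealInnerProductSpace
open scoped NNReal

/-- Tangent line inequality for the concave function `x ↦ x ^ q`, `0 ≤ q ≤ 1`. -/
private lemma tangent_rpow {q s t : ℝ} (hq0 : 0 ≤ q) (hq1 : q ≤ 1) (hs : 0 < s) (ht : 0 ≤ t) :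
    t ^ q ≤ s ^ q + q * s ^ (q - 1) * (t - s) := by
  have h1 : -1 ≤ t / s - 1 := by
    have : 0 ≤ t / s := div_nonneg ht hs.le
    linarith
  have h := rpow_one_add_le_one_add_mul_self h1 hq0 hq1
  rw [show 1 + (t / s - 1) = t / s by ring] at h
  have hsq : 0 < s ^ q := Real.rpow_pos_of_pos hs q
  have h2 : (t / s) ^ q = t ^ q / s ^ q := Real.div_rpow ht hs.le q
  rw [h2, div_le_iff₀ hsq] at h
  have h3 : s ^ (q - 1) * s = s ^ q := by
    rw [← Real.rpow_add_one hs.ne' (q - 1)]; ring_nf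
  have h4 : s ^ (q - 1) * t = s ^ q * (t / s) := by
    rw [Real.rpow_sub hs, Real.rpow_one]; field_simp
  nlinarith [h, hsq]

/-- `s ^ z ≥ (s^2 + t^2) ^ (z/2)` for `z ≤ 0`, `0 < s`. -/
private lemma base_comp {s t z : ℝ} (hs : 0 < s) (hz : z ≤ 0) :
    (s ^ 2 + t ^ 2) ^ (z / 2) ≤ s ^ z := by
  have h1 : 0 < s ^ 2 + t ^ 2 := by positivity
  have h2 : s ^ 2 ≤ s ^ 2 + t ^ 2 := by nlinarith [sq_nonneg t]
  have h3 : (s ^ 2 + t ^ 2) ^ (z / 2) ≤ (s ^ 2 : ℝ) ^ (z / 2) :=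
    Real.rpow_le_rpow_of_nonpos (by positivity) h2 (by linarith)
  calc (s ^ 2 + t ^ 2) ^ (z / 2) ≤ (s ^ 2 : ℝ) ^ (z / 2) := h3
    _ = s ^ z := by
        rw [← Real.rpow_natCast s 2, ← Real.rpow_mul hs.le]
        congr 1
        push_cast
        ring

/-- Endpoint inequality, parallel case (`t ≤ s`). -/
private lemma endpoint_par {p s t : ℝ} (hp : p ∈ Set.Ioo (1 : ℝ) 2) (hs : 0 < s)
    (ht : 0 ≤ t) (hts : t ≤ s) :
    (p - 1) * (s - t) ^ 2 * (s ^ 2 + t ^ 2) ^ ((p - 2) / 2) ≤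
      (s ^ (p - 1) - t ^ (p - 1)) * (s - t) := by
  obtain ⟨hp1, hp2⟩ := hp
  have htan := tangent_rpow (q := p - 1) (by linarith) (by linarith) hs ht
  have hbc := base_comp (t := t) hs (show p - 2 ≤ 0 by linarith)
  rw [show p - 1 - 1 = p - 2 by ring] at htan
  have h1 : (p - 1) * s ^ (p - 2) * (s - t) ≤ s ^ (p - 1) - t ^ (p - 1) := by nlinarith
  have h2 : (p - 1) * (s ^ 2 + t ^ 2) ^ ((p - 2) / 2) * (s - t) ≤
      (p - 1) * s ^ (p - 2) * (s - t) := by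
    have := mul_le_mul_of_nonneg_left hbc (show 0 ≤ p - 1 by linarith)
    exact mul_le_mul_of_nonneg_right this (by linarith)
  nlinarith [h1, h2]

/-- Endpoint inequality, antiparallel case. -/
private lemma endpoint_anti {p s t : ℝ} (hp : p ∈ Set.Ioo (1 : ℝ) 2) (hs : 0 ≤ s)
    (ht : 0 ≤ t) (hst : 0 < s ^ 2 + t ^ 2) :
    (p - 1) * (s + t) ^ 2 * (s ^ 2 + t ^ 2) ^ ((p - 2) / 2) ≤
      (s ^ (p - 1) + t ^ (p - 1)) * (s + t) := by
  obtain ⟨hp1, hp2⟩ := hp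
  have key : (s + t) * (s ^ 2 + t ^ 2) ^ ((p - 2) / 2) ≤ s ^ (p - 1) + t ^ (p - 1) := by
    have hs' : s * (s ^ 2 + t ^ 2) ^ ((p - 2) / 2) ≤ s ^ (p - 1) := by
      rcases eq_or_lt_of_le hs with h | h
      · rw [← h]; simp [Real.zero_rpow (show p - 1 ≠ 0 by linarith)]
      · have hbc := base_comp (t := t) h (show p - 2 ≤ 0 by linarith)
        calc s * (s ^ 2 + t ^ 2) ^ ((p - 2) / 2) ≤ s * s ^ (p - 2) :=
              mul_le_mul_of_nonneg_left hbc h.le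
          _ = s ^ (p - 1) := by
              rw [mul_comm, ← Real.rpow_add_one h.ne' (p - 2)]; congr 1; ring
    have ht' : t * (s ^ 2 + t ^ 2) ^ ((p - 2) / 2) ≤ t ^ (p - 1) := by
      rcases eq_or_lt_of_le ht with h | h
      · rw [← h]; simp [Real.zero_rpow (show p - 1 ≠ 0 by linarith)]
      · have hbc := base_comp (t := s) h (show p - 2 ≤ 0 by linarith)
        rw [add_comm (s ^ 2)]
        calc t * (t ^ 2 + s ^ 2) ^ ((p - 2) / 2) ≤ t * t ^ (p - 2) :=
              mul_le_mul_of_nonneg_left hbc h.le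
          _ = t ^ (p - 1) := by
              rw [mul_comm, ← Real.rpow_add_one h.ne' (p - 2)]; congr 1; ring
    nlinarith [hs', ht']
  have hK : 0 ≤ (s ^ 2 + t ^ 2) ^ ((p - 2) / 2) := Real.rpow_nonneg hst.le _
  have hadd : 0 ≤ s + t := add_nonneg hs ht
  have hA := mul_le_mul_of_nonneg_right key hadd
  have hX : 0 ≤ (s + t) ^ 2 * (s ^ 2 + t ^ 2) ^ ((p - 2) / 2) :=
    mul_nonneg (sq_nonneg _) hK
  nlinarith [hA, hX]

/-- Core scalar inequality (asymmetric version assuming `t ≤ s`). -/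
private lemma core_le {p s t c : ℝ} (hp : p ∈ Set.Ioo (1 : ℝ) 2) (hs : 0 ≤ s) (ht : 0 ≤ t)
    (hts : t ≤ s) (hst : 0 < s ^ 2 + t ^ 2) (hc1 : -(s * t) ≤ c) (hc2 : c ≤ s * t) :
    (p - 1) * (s ^ 2 + t ^ 2 - 2 * c) * (s ^ 2 + t ^ 2) ^ ((p - 2) / 2) ≤
      s ^ p + t ^ p - (s ^ (p - 2) + t ^ (p - 2)) * c := by
  obtain ⟨hp1, hp2⟩ := hp
  have hs0 : 0 < s := by nlinarith
  have hsp1 : s ^ (p - 1) = s ^ (p - 2) * s := by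
    rw [← Real.rpow_add_one hs0.ne' (p - 2)]; congr 1; ring
  have hsp : s ^ p = s ^ (p - 1) * s := by
    rw [← Real.rpow_add_one hs0.ne' (p - 1)]; congr 1; ring
  have htp1 : t ^ (p - 1) = t ^ (p - 2) * t := by
    rcases eq_or_lt_of_le ht with h | h
    · rw [← h]; simp [Real.zero_rpow (show p - 1 ≠ 0 by linarith)]
    · rw [← Real.rpow_add_one h.ne' (p - 2)]; congr 1; ring
  have htp : t ^ p = t ^ (p - 1) * t := by
    rcases eq_or_lt_of_le ht with h | h
    · rw [← h]; simp [Real.zero_rpow (show p ≠ 0 by linarith)]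
    · rw [← Real.rpow_add_one h.ne' (p - 1)]; congr 1; ring
  set K := (s ^ 2 + t ^ 2) ^ ((p - 2) / 2) with hK
  have hF1 : (p - 1) * (s ^ 2 + t ^ 2 - 2 * (s * t)) * K ≤
      s ^ p + t ^ p - (s ^ (p - 2) + t ^ (p - 2)) * (s * t) := by
    have h := endpoint_par ⟨hp1, hp2⟩ hs0 ht hts
    have e1 : s ^ p + t ^ p - (s ^ (p - 2) + t ^ (p - 2)) * (s * t) =
        (s ^ (p - 1) - t ^ (p - 1)) * (s - t) := by
      rw [hsp, htp, hsp1, htp1]; ring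
    rw [e1]
    calc (p - 1) * (s ^ 2 + t ^ 2 - 2 * (s * t)) * K
        = (p - 1) * (s - t) ^ 2 * K := by ring_nf
      _ ≤ (s ^ (p - 1) - t ^ (p - 1)) * (s - t) := h
  have hF2 : (p - 1) * (s ^ 2 + t ^ 2 + 2 * (s * t)) * K ≤
      s ^ p + t ^ p + (s ^ (p - 2) + t ^ (p - 2)) * (s * t) := by
    have h := endpoint_anti (p := p) ⟨hp1, hp2⟩ hs0.le ht hst
    have e2 : s ^ p + t ^ p + (s ^ (p - 2) + t ^ (p - 2)) * (s * t) =
        (s ^ (p - 1) + t ^ (p - 1)) * (s + t) := by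
      rw [hsp, htp, hsp1, htp1]; ring
    rw [e2]
    calc (p - 1) * (s ^ 2 + t ^ 2 + 2 * (s * t)) * K
        = (p - 1) * (s + t) ^ 2 * K := by ring_nf
      _ ≤ (s ^ (p - 1) + t ^ (p - 1)) * (s + t) := h
  rcases eq_or_lt_of_le (mul_nonneg hs ht) with h0 | h0
  · have hc0 : c = 0 := le_antisymm (by linarith) (by linarith)
    rw [hc0]; nlinarith [hF1, hF2]
  · nlinarith [mul_le_mul_of_nonneg_left hF1 (show 0 ≤ s * t + c by linarith),
      mul_le_mul_of_nonneg_left hF2 (show 0 ≤ s * t - c by linarith), h0]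

/-- Core scalar inequality, symmetric. -/
private lemma core {p s t c : ℝ} (hp : p ∈ Set.Ioo (1 : ℝ) 2) (hs : 0 ≤ s) (ht : 0 ≤ t)
    (hst : 0 < s ^ 2 + t ^ 2) (hc1 : -(s * t) ≤ c) (hc2 : c ≤ s * t) :
    (p - 1) * (s ^ 2 + t ^ 2 - 2 * c) * (s ^ 2 + t ^ 2) ^ ((p - 2) / 2) ≤
      s ^ p + t ^ p - (s ^ (p - 2) + t ^ (p - 2)) * c := by
  rcases le_total t s with h | h
  · exact core_le hp hs ht h hst hc1 hc2
  · have := core_le (s := t) (t := s) hp ht hs h (by linarith) (by linarith [hc1])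
      (by linarith [hc2])
    rw [add_comm (t ^ 2) (s ^ 2)] at this
    linarith [this]

/-- ℓᵖ–ℓ² comparison: `(s² + t²)^{1/2} ≤ (s^p + t^p)^{1/p}` for `0 < p ≤ 2`. -/
private lemma lp_comp {p s t : ℝ} (hp0 : 0 < p) (hp2 : p ≤ 2) (hs : 0 ≤ s) (ht : 0 ≤ t) :
    ((s ^ 2 + t ^ 2) : ℝ) ^ ((1 : ℝ) / 2) ≤ (s ^ p + t ^ p) ^ ((1 : ℝ) / p) := by
  have h := NNReal.rpow_add_rpow_le (p := p) (q := 2) s.toNNReal t.toNNReal hp0 hp2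
  have hs' : ((s.toNNReal : ℝ)) = s := Real.coe_toNNReal s hs
  have ht' : ((t.toNNReal : ℝ)) = t := Real.coe_toNNReal t ht
  have h2 := NNReal.coe_le_coe.mpr h
  rw [NNReal.coe_rpow, NNReal.coe_rpow, NNReal.coe_add, NNReal.coe_add,
    NNReal.coe_rpow, NNReal.coe_rpow, NNReal.coe_rpow, NNReal.coe_rpow, hs', ht'] at h2
  have e1 : s ^ (2 : ℝ) = s ^ 2 := by rw [← Real.rpow_natCast s 2]; norm_num
  have e2 : t ^ (2 : ℝ) = t ^ 2 := by rw [← Real.rpow_natCast t 2]; norm_num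
  rwa [e1, e2] at h2

/-- Final comparison: `(s^p + t^p)^{(p-2)/p} ≤ (s² + t²)^{(p-2)/2}`. -/
private lemma final_comp {p s t : ℝ} (hp : p ∈ Set.Ioo (1 : ℝ) 2) (hs : 0 ≤ s) (ht : 0 ≤ t)
    (hst : 0 < s ^ 2 + t ^ 2) :
    (s ^ p + t ^ p) ^ ((p - 2) / p) ≤ (s ^ 2 + t ^ 2) ^ ((p - 2) / 2) := by
  obtain ⟨hp1, hp2⟩ := hp
  have hp0 : 0 < p := by linarith
  have h := lp_comp hp0 hp2.le hs ht
  have h1 : (0 : ℝ) < (s ^ 2 + t ^ 2) ^ ((1 : ℝ) / 2) := Real.rpow_pos_of_pos hst _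
  have h2 := Real.rpow_le_rpow_of_nonpos h1 h (show p - 2 ≤ 0 by linarith)
  rw [← Real.rpow_mul (by positivity), ← Real.rpow_mul hst.le] at h2
  rw [show 1 / p * (p - 2) = (p - 2) / p by field_simp,
    show 1 / 2 * (p - 2) = (p - 2) / 2 by ring] at h2
  exact h2

/-- For `p ∈ (1,2)` and `(a,b) ≠ (0,0)`:
`⟪|a|^{p-2} a - |b|^{p-2} b, a - b⟫ ≥ (p-1) |a-b|² (|a|^p + |b|^p)^{(p-2)/p}`. -/
theorem stmt_1 (N : ℕ) (p : ℝ) (hp : p ∈ Set.Ioo (1 : ℝ) 2)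
    (a b : EuclideanSpace ℝ (Fin N)) (hab : ¬(a = 0 ∧ b = 0)) :
    ⟪(‖a‖ ^ (p - 2)) • a - (‖b‖ ^ (p - 2)) • b, a - b⟫ ≥
      (p - 1) * ‖a - b‖ ^ 2 * (‖a‖ ^ p + ‖b‖ ^ p) ^ ((p - 2) / p) := by
  obtain ⟨hp1, hp2⟩ := hp
  set s := ‖a‖ with hsdef
  set t := ‖b‖ with htdef
  set c := ⟪a, b⟫ with hcdef
  have hs : 0 ≤ s := norm_nonneg a
  have ht : 0 ≤ t := norm_nonneg b
  have hst : 0 < s ^ 2 + t ^ 2 := by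
    rcases not_and_or.mp hab with h | h
    · have : 0 < s := by simpa [hsdef, norm_pos_iff] using h
      positivity
    · have : 0 < t := by simpa [htdef, norm_pos_iff] using h
      positivity
  have hcauchy := abs_real_inner_le_norm a b
  have hc1 : -(s * t) ≤ c := neg_le_of_abs_le hcauchy
  have hc2 : c ≤ s * t := le_of_abs_le hcauchy
  have hinner : ⟪(s ^ (p - 2)) • a - (t ^ (p - 2)) • b, a - b⟫ =
      s ^ p + t ^ p - (s ^ (p - 2) + t ^ (p - 2)) * c := by
    rw [inner_sub_left, inner_sub_right, inner_sub_right, real_inner_smul_left,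
      real_inner_smul_left, real_inner_smul_left, real_inner_smul_left,
      real_inner_self_eq_norm_sq, real_inner_self_eq_norm_sq]
    have hsp : s ^ (p - 2) * s ^ 2 = s ^ p := by
      rw [← Real.rpow_natCast s 2, ← Real.rpow_add' hs (by norm_num; linarith)]
      norm_num
    have htp : t ^ (p - 2) * t ^ 2 = t ^ p := by
      rw [← Real.rpow_natCast t 2, ← Real.rpow_add' ht (by norm_num; linarith)]
      norm_num
    have hba : (inner ℝ b a : ℝ) = c := by rw [real_inner_comm]
    rw [hba, ← hsdef, ← htdef]
    linear_combination hsp + htp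
  have hnorm : ‖a - b‖ ^ 2 = s ^ 2 + t ^ 2 - 2 * c := by
    rw [norm_sub_sq_real, ← hsdef, ← htdef, ← hcdef]; ring
  rw [ge_iff_le, hinner, hnorm]
  have hcore := core (c := c) ⟨hp1, hp2⟩ hs ht hst hc1 hc2
  have hfc := final_comp (s := s) (t := t) ⟨hp1, hp2⟩ hs ht hst
  have hquad : 0 ≤ s ^ 2 + t ^ 2 - 2 * c := by nlinarith
  calc (p - 1) * (s ^ 2 + t ^ 2 - 2 * c) * (s ^ p + t ^ p) ^ ((p - 2) / p)
      ≤ (p - 1) * (s ^ 2 + t ^ 2 - 2 * c) * (s ^ 2 + t ^ 2) ^ ((p - 2) / 2) :=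
        mul_le_mul_of_nonneg_left hfc (by nlinarith)
    _ ≤ s ^ p + t ^ p - (s ^ (p - 2) + t ^ (p - 2)) * c := hcore
end

section
/- Let p ≥ 2 and q ≥ p/2. For all vectors a, b in ℝ^N with |a|, |b| ≤ K, there exists a constant C depending only on p, q, K such that ||a|^q - |b|^q|² ≤ C · ||a|^{(p-2)/2} a - |b|^{(p-2)/2} b|². -/
private lemma rpow_lip {t M x y : ℝ} (ht : 1 ≤ t) (hx : x ∈ Set.Icc 0 M)
    (hy : y ∈ Set.Icc 0 M) : |x ^ t - y ^ t| ≤ t * M ^ (t - 1) * |x - y| := by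
  have ht0 : (0:ℝ) ≤ t := le_trans zero_le_one ht
  have hM : (0:ℝ) ≤ M := le_trans hx.1 hx.2
  have hderiv : ∀ z ∈ Set.Icc (0:ℝ) M,
      HasDerivWithinAt (fun u : ℝ => u ^ t) (t * z ^ (t - 1)) (Set.Icc 0 M) z := by
    intro z _
    exact (Real.hasDerivAt_rpow_const (Or.inr ht)).hasDerivWithinAt
  have hbound : ∀ z ∈ Set.Icc (0:ℝ) M, ‖t * z ^ (t - 1)‖ ≤ t * M ^ (t - 1) := by
    intro z hz
    rw [Real.norm_eq_abs, abs_of_nonneg (mul_nonneg ht0 (Real.rpow_nonneg hz.1 _))]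
    exact mul_le_mul_of_nonneg_left
      (Real.rpow_le_rpow hz.1 hz.2 (by linarith)) ht0
  have := (convex_Icc (0:ℝ) M).norm_image_sub_le_of_norm_hasDerivWithin_le
    hderiv hbound hy hx
  simpa [Real.norm_eq_abs] using this

/-- For `p ≥ 2`, `q ≥ p/2`, `K` a bound on `|a|, |b|`, there is `C = C(p,q,K) > 0` with
`||a|^q - |b|^q|² ≤ C ||a|^{(p-2)/2} a - |b|^{(p-2)/2} b|²`. -/
theorem stmt_2 (N : ℕ) (p q K : ℝ) (hp : 2 ≤ p) (hq : p / 2 ≤ q) :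
    ∃ C > (0 : ℝ), ∀ a b : EuclideanSpace ℝ (Fin N), ‖a‖ ≤ K → ‖b‖ ≤ K →
      |‖a‖ ^ q - ‖b‖ ^ q| ^ 2 ≤
        C * ‖(‖a‖ ^ ((p - 2) / 2)) • a - (‖b‖ ^ ((p - 2) / 2)) • b‖ ^ 2 := by
  have hp2 : (0:ℝ) < p / 2 := by linarith
  set K' : ℝ := max K 1 with hK'
  have hK1 : (1:ℝ) ≤ K' := le_max_right _ _
  have hK0 : (0:ℝ) < K' := lt_of_lt_of_le one_pos hK1
  set t : ℝ := q / (p / 2) with htdef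
  have ht : 1 ≤ t := (one_le_div hp2).mpr hq
  set M : ℝ := K' ^ (p / 2) with hMdef
  have hM1 : (1:ℝ) ≤ M := Real.one_le_rpow hK1 (le_of_lt hp2)
  set L : ℝ := t * M ^ (t - 1) with hLdef
  have hL : (0:ℝ) < L :=
    mul_pos (lt_of_lt_of_le one_pos ht) (Real.rpow_pos_of_pos (lt_of_lt_of_le one_pos hM1) _)
  refine ⟨L ^ 2, pow_pos hL 2, fun a b ha hb => ?_⟩
  -- key facts
  have key : ∀ c : EuclideanSpace ℝ (Fin N), ‖c‖ ≤ K →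
      ‖(‖c‖ ^ ((p - 2) / 2)) • c‖ = ‖c‖ ^ (p / 2) ∧ ‖c‖ ^ (p / 2) ∈ Set.Icc (0:ℝ) M := by
    intro c hc
    have hc0 : (0:ℝ) ≤ ‖c‖ := norm_nonneg c
    constructor
    · rw [norm_smul, Real.norm_eq_abs, abs_of_nonneg (Real.rpow_nonneg hc0 _)]
      rcases eq_or_lt_of_le hc0 with h | h
      · rw [← h]
        simp [Real.zero_rpow (ne_of_gt hp2)]
      · rw [← Real.rpow_add_one (ne_of_gt h)]
        congr 1
        ring
    · refine ⟨Real.rpow_nonneg hc0 _, ?_⟩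
      exact Real.rpow_le_rpow hc0 (le_trans hc (le_max_left K 1)) (le_of_lt hp2)
  obtain ⟨hna, hxa⟩ := key a ha
  obtain ⟨hnb, hxb⟩ := key b hb
  have hpow : ∀ c : EuclideanSpace ℝ (Fin N), (‖c‖ ^ (p / 2)) ^ t = ‖c‖ ^ q := by
    intro c
    rw [← Real.rpow_mul (norm_nonneg c)]
    have hpt : p / 2 * t = q := by
      rw [htdef]
      field_simp
    rw [hpt]
  have h1 : |‖a‖ ^ q - ‖b‖ ^ q| ≤ L * ‖(‖a‖ ^ ((p - 2) / 2)) • a - (‖b‖ ^ ((p - 2) / 2)) • b‖ := by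
    rw [← hpow a, ← hpow b]
    refine le_trans (rpow_lip ht hxa hxb) ?_
    refine mul_le_mul_of_nonneg_left ?_ (le_of_lt hL)
    rw [← hna, ← hnb]
    exact abs_norm_sub_norm_le _ _
  calc |‖a‖ ^ q - ‖b‖ ^ q| ^ 2
      ≤ (L * ‖(‖a‖ ^ ((p - 2) / 2)) • a - (‖b‖ ^ ((p - 2) / 2)) • b‖) ^ 2 :=
        pow_le_pow_left₀ (abs_nonneg _) h1 2
    _ = L ^ 2 * ‖(‖a‖ ^ ((p - 2) / 2)) • a - (‖b‖ ^ ((p - 2) / 2)) • b‖ ^ 2 := by ring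
end

section
/- Let p > 2 and let K > (N + p − 3)/ρ for some ρ > 0. Define ū(x) = C(1 − e^{−K(|x| − ρ)}) on {x ∈ ℝ^N : |x| ≥ ρ} with C > 0. Then for each n ≥ 1 and each x with |x| > ρ, one has −div((|∇ū|² + 1/n)^{(p−2)/2} ∇ū)(x) ≥ 0. -/
open RealInnerProductSpace
theorem myNorm {E : Type*} [NormedAddCommGroup E] [InnerProductSpace ℝ E] {x : E} (hx : x ≠ 0) :
    HasFDerivAt (fun z : E => ‖z‖) (‖x‖⁻¹ • innerSL ℝ x) x := by
  have h1 : HasFDerivAt (fun z : E => ‖z‖ ^ 2) (2 • innerSL ℝ x) x :=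
    (hasStrictFDerivAt_norm_sq x).hasFDerivAt
  have h2 : (‖x‖ : ℝ) ^ 2 ≠ 0 := pow_ne_zero _ (norm_ne_zero_iff.2 hx)
  have h3 := (Real.hasDerivAt_sqrt h2).comp_hasFDerivAt x h1
  have hfun : ((fun x => Real.sqrt x) ∘ fun z : E => ‖z‖ ^ 2) = fun z : E => ‖z‖ := by
    funext z; exact Real.sqrt_sq (norm_nonneg z)
  rw [hfun] at h3
  have hx' : ‖x‖ ≠ 0 := norm_ne_zero_iff.2 hx
  have heq : (1 / (2 * Real.sqrt (‖x‖ ^ 2))) • (2 • innerSL ℝ x) = ‖x‖⁻¹ • innerSL ℝ x := by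
    ext v
    simp only [ContinuousLinearMap.smul_apply, Real.sqrt_sq (norm_nonneg x), smul_eq_mul]
    field_simp
    ring
  rwa [heq] at h3

theorem myPhi (C K ρ : ℝ) (t : ℝ) :
    HasDerivAt (fun s : ℝ => C * (1 - Real.exp (-K * (s - ρ))))
      (C * K * Real.exp (-K * (t - ρ))) t := by
  have h1 : HasDerivAt (fun s : ℝ => -K * (s - ρ)) (-K) t := by
    simpa using ((hasDerivAt_id t).sub_const ρ).const_mul (-K)
  have h2 := h1.exp
  have h3 := ((hasDerivAt_const t (1:ℝ)).sub h2).const_mul C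
  convert h3 using 1
  all_goals first | rfl | ring

theorem myGrad {E : Type*} [NormedAddCommGroup E] [InnerProductSpace ℝ E] [CompleteSpace E]
    (C K ρ : ℝ) {x : E} (hx : x ≠ 0) :
    HasGradientAt (fun z : E => C * (1 - Real.exp (-K * (‖z‖ - ρ))))
      ((C * K * Real.exp (-K * (‖x‖ - ρ)) / ‖x‖) • x) x := by
  have h := (myPhi C K ρ ‖x‖).comp_hasFDerivAt x (myNorm hx)
  rw [hasGradientAt_iff_hasFDerivAt]
  have heq : (InnerProductSpace.toDual ℝ E) ((C * K * Real.exp (-K * (‖x‖ - ρ)) / ‖x‖) • x)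
      = (C * K * Real.exp (-K * (‖x‖ - ρ))) • (‖x‖⁻¹ • innerSL ℝ x) := by
    ext v
    simp only [InnerProductSpace.toDual_apply_apply, ContinuousLinearMap.smul_apply, smul_eq_mul,
      real_inner_smul_left, innerSL_apply_apply]
    ring
  rw [heq]
  exact h

theorem myPsi (C K ρ c q : ℝ) {r : ℝ} (hr : r ≠ 0)
    (hA : (C * K * Real.exp (-K * (r - ρ))) ^ 2 + c ≠ 0) :
    HasDerivAt (fun t : ℝ => ((C * K * Real.exp (-K * (t - ρ))) ^ 2 + c) ^ q
        * (C * K * Real.exp (-K * (t - ρ))) * t⁻¹)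
      ((q * ((C * K * Real.exp (-K * (r - ρ))) ^ 2 + c) ^ (q - 1)
          * (2 * (C * K * Real.exp (-K * (r - ρ))) * (-K * (C * K * Real.exp (-K * (r - ρ))))))
          * (C * K * Real.exp (-K * (r - ρ))) * r⁻¹
        + ((C * K * Real.exp (-K * (r - ρ))) ^ 2 + c) ^ q
          * (-K * (C * K * Real.exp (-K * (r - ρ)))) * r⁻¹
        + ((C * K * Real.exp (-K * (r - ρ))) ^ 2 + c) ^ q
          * (C * K * Real.exp (-K * (r - ρ))) * (-(r ^ 2)⁻¹)) r := by
  have h1 : HasDerivAt (fun s : ℝ => -K * (s - ρ)) (-K) r := by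
    simpa using ((hasDerivAt_id r).sub_const ρ).const_mul (-K)
  have hg : HasDerivAt (fun t : ℝ => C * K * Real.exp (-K * (t - ρ)))
      (-K * (C * K * Real.exp (-K * (r - ρ)))) r := by
    have := h1.exp.const_mul (C * K)
    convert this using 1
    all_goals first | rfl | ring
  have hA2 : HasDerivAt (fun t : ℝ => (C * K * Real.exp (-K * (t - ρ))) ^ 2 + c)
      (2 * (C * K * Real.exp (-K * (r - ρ))) * (-K * (C * K * Real.exp (-K * (r - ρ))))) r := by
    have := (hg.pow 2).add_const c
    convert this using 1
    all_goals first | rfl | ring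
  have hrpow := hA2.rpow_const (p := q) (Or.inl hA)
  have hinv := hasDerivAt_inv hr
  have := (hrpow.mul hg).mul hinv
  convert this using 1
  all_goals first | rfl | (simp only [Pi.mul_apply]; ring)

set_option maxHeartbeats 1000000 in
/-- The radial comparison function `ū(x) = C(1 - e^{-K(|x|-ρ)})` with `p > 2`,
`K > (N+p-3)/ρ`, `ρ > 0`, `C > 0` satisfies
`-div((|∇ū|² + 1/n)^{(p-2)/2} ∇ū)(x) ≥ 0` for `|x| > ρ` and every `n ≥ 1`,
where the divergence is computed as the trace of the Jacobian of the flux. -/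
theorem stmt_10 (N : ℕ) (p ρ K C : ℝ) (hp : 2 < p) (hρ : 0 < ρ)
    (hK : (N + p - 3) / ρ < K) (hC : 0 < C) (n : ℕ) (hn : 1 ≤ n) :
    ∀ x : EuclideanSpace ℝ (Fin N), ρ < ‖x‖ →
      0 ≤ -(∑ i : Fin N,
        ⟪fderiv ℝ
            (fun y : EuclideanSpace ℝ (Fin N) =>
              ((‖gradient (fun z : EuclideanSpace ℝ (Fin N) =>
                    C * (1 - Real.exp (-K * (‖z‖ - ρ)))) y‖ ^ 2 + 1 / n) ^ ((p - 2) / 2)) •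
                gradient (fun z : EuclideanSpace ℝ (Fin N) =>
                    C * (1 - Real.exp (-K * (‖z‖ - ρ)))) y)
            x (EuclideanSpace.basisFun (Fin N) ℝ i),
          EuclideanSpace.basisFun (Fin N) ℝ i⟫) := by
  intro x hx
  have hr0 : (0:ℝ) < ‖x‖ := hρ.trans hx
  have hx0 : x ≠ 0 := by
    intro h; rw [h, norm_zero] at hr0; exact lt_irrefl 0 hr0
  have hN : 1 ≤ N := by
    rcases Nat.eq_zero_or_pos N with h0 | h; swap; · exact h
    exfalso; subst h0
    have : x = 0 := PiLp.ext fun i => Fin.elim0 i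
    exact hx0 this
  have hN1 : (1:ℝ) ≤ N := by exact_mod_cast hN
  have hK0 : 0 < K := by
    have h1 : (0:ℝ) < (N + p - 3) / ρ := div_pos (by linarith) hρ
    linarith
  have hKρ : (N : ℝ) + p - 3 < K * ρ := (div_lt_iff₀ hρ).mp hK
  have hcn : (0:ℝ) < 1 / n := by
    have : (0:ℝ) < n := by exact_mod_cast hn
    positivity
  -- gradient formula
  have hgrad : ∀ y : EuclideanSpace ℝ (Fin N), y ≠ 0 →
      gradient (fun z : EuclideanSpace ℝ (Fin N) => C * (1 - Real.exp (-K * (‖z‖ - ρ)))) y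
        = (C * K * Real.exp (-K * (‖y‖ - ρ)) / ‖y‖) • y :=
    fun y hy => (myGrad C K ρ hy).gradient
  -- eventual equality of the flux with a radial field
  have hopen : IsOpen {y : EuclideanSpace ℝ (Fin N) | ρ < ‖y‖} := isOpen_lt continuous_const continuous_norm
  have hmem : {y : EuclideanSpace ℝ (Fin N) | ρ < ‖y‖} ∈ nhds x := hopen.mem_nhds hx
  have hFeq : (fun y : EuclideanSpace ℝ (Fin N) =>
      ((‖gradient (fun z : EuclideanSpace ℝ (Fin N) => C * (1 - Real.exp (-K * (‖z‖ - ρ)))) y‖ ^ 2 + 1 / n)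
          ^ ((p - 2) / 2)) •
        gradient (fun z : EuclideanSpace ℝ (Fin N) => C * (1 - Real.exp (-K * (‖z‖ - ρ)))) y)
      =ᶠ[nhds x] (fun y : EuclideanSpace ℝ (Fin N) =>
        (((C * K * Real.exp (-K * (‖y‖ - ρ))) ^ 2 + 1 / n) ^ ((p - 2) / 2)
          * (C * K * Real.exp (-K * (‖y‖ - ρ))) * ‖y‖⁻¹) • y) := by
    refine Filter.eventuallyEq_of_mem hmem (fun y hy => ?_)
    have hy' : ρ < ‖y‖ := hy
    have hyn : (0:ℝ) < ‖y‖ := hρ.trans hy'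
    have hy0 : y ≠ 0 := by
      intro h; rw [h, norm_zero] at hyn; exact lt_irrefl 0 hyn
    have h1 := hgrad y hy0
    rw [h1]
    have h2 : ‖(C * K * Real.exp (-K * (‖y‖ - ρ)) / ‖y‖) • y‖ ^ 2
        = (C * K * Real.exp (-K * (‖y‖ - ρ))) ^ 2 := by
      rw [norm_smul, Real.norm_eq_abs, abs_of_nonneg (by positivity), mul_pow]
      field_simp
    rw [h2, smul_smul]
    congr 1
    field_simp
  have hψ := myPsi C K ρ (1/(n:ℝ)) ((p-2)/2) (ne_of_gt hr0) (by positivity)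
  have hs := hψ.comp_hasFDerivAt x (myNorm hx0)
  have hL := hs.smul (hasFDerivAt_id x)
  have hfd := hFeq.fderiv_eq.trans hL.fderiv
  rw [hfd]
  simp only [ContinuousLinearMap.add_apply, ContinuousLinearMap.smul_apply,
    ContinuousLinearMap.coe_id', id_eq, ContinuousLinearMap.smulRight_apply,
    innerSL_apply_apply, inner_add_left, real_inner_smul_left,
    EuclideanSpace.basisFun_apply, EuclideanSpace.inner_single_left,
    EuclideanSpace.inner_single_right, EuclideanSpace.single_apply, conj_trivial,
    smul_eq_mul, Function.comp_apply, mul_one, if_pos, PiLp.smul_apply, one_mul]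
  set r := ‖x‖ with hrd
  set G := C * K * Real.exp (-K * (r - ρ)) with hGd
  set A := G ^ 2 + 1 / (n:ℝ) with hAd
  set B1 := A ^ ((p - 2) / 2) with hB1d
  set B := A ^ ((p - 2) / 2 - 1) with hBd
  set D := (p - 2) / 2 * B * (2 * G * (-K * G)) * G * r⁻¹ + B1 * (-K * G) * r⁻¹
    + B1 * G * -(r ^ 2)⁻¹ with hDd
  have hxx : ∑ i : Fin N, x i * x i = r ^ 2 := by
    rw [hrd, ← real_inner_self_eq_norm_sq]
    simp only [PiLp.inner_apply, RCLike.inner_apply, conj_trivial]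
  have h2 : ∑ i : Fin N, D * (r⁻¹ * x i) * x i = D * r⁻¹ * ∑ i : Fin N, x i * x i := by
    rw [Finset.mul_sum]; exact Finset.sum_congr rfl (fun i _ => by ring)
  rw [Finset.sum_add_distrib, h2, hxx, Finset.sum_const, Finset.card_univ,
    Fintype.card_fin, nsmul_eq_mul, neg_nonneg]
  have hGpos : 0 < G := by rw [hGd]; positivity
  have hApos : 0 < A := by rw [hAd]; exact add_pos (by positivity) hcn
  have hBpos : 0 < B := by rw [hBd]; exact Real.rpow_pos_of_pos hApos _
  have hB1B : B1 = B * A := by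
    rw [hB1d, hBd, ← Real.rpow_add_one hApos.ne']
    congr 1; ring
  have hrne : r ≠ 0 := hr0.ne'
  rw [hDd, hB1B]
  have heq : (N:ℝ) * (B * A * G * r⁻¹)
      + ((p - 2) / 2 * B * (2 * G * (-K * G)) * G * r⁻¹ + B * A * (-K * G) * r⁻¹
        + B * A * G * -(r ^ 2)⁻¹) * r⁻¹ * r ^ 2
      = (B * G) * (((N:ℝ) - 1) * A * r⁻¹ - (p - 2) * K * G ^ 2 - K * A) := by
    field_simp
    ring
  rw [heq]
  have t4 : ((N:ℝ) - 1) * A * r⁻¹ ≤ K * A := by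
    rw [← div_eq_mul_inv, div_le_iff₀ hr0]
    have e1 : ((N:ℝ) - 1) * A ≤ ((N:ℝ) + p - 3) * A :=
      mul_le_mul_of_nonneg_right (by linarith) hApos.le
    have e2 : ((N:ℝ) + p - 3) * A < K * ρ * A := mul_lt_mul_of_pos_right hKρ hApos
    have e3 : K * ρ * A ≤ K * r * A :=
      mul_le_mul_of_nonneg_right (mul_le_mul_of_nonneg_left hx.le hK0.le) hApos.le
    have e4 : K * r * A = K * A * r := by ring
    linarith
  have hbr : ((N:ℝ) - 1) * A * r⁻¹ - (p - 2) * K * G ^ 2 - K * A ≤ 0 := by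
    nlinarith [mul_pos (mul_pos (show (0:ℝ) < p - 2 by linarith) hK0) (pow_pos hGpos 2)]
  have hfin := mul_nonpos_of_nonneg_of_nonpos (le_of_lt (mul_pos hBpos hGpos)) hbr
  linarith
end
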